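/- For a linear Gaussian Markov chain Θ → Y → Z with all conditional covariances positive definite, the data processing inequality holds in closed form: I(Θ;Z) ≤ I(Θ;Y), where I(Θ;Y) = (1/2)log(|Σ_Y|/|S|) and I(Θ;Z) = (1/2)log(|Σ_Z|/|Σ_{Z|Θ}|) with Σ_Z = R_φΣ_YR_φᵀ + Q_φ and Σ_{Z|Θ} = R_φ S R_φᵀ + Q_φ. -/

import Mathlib

open Matrix
open scoped MatrixOrder

/-- Data processing inequality in closed form for a linear Gaussian Markov chain
`Θ → Y → Z`: `I(Θ;Z) = ½ log(|Σ_Z|/|Σ_{Z|Θ}|) ≤ ½ log(|Σ_Y|/|S|) = I(Θ;Y)`, where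
`Σ_Y = AΣ_ΘAᵀ + S`, `Σ_Z = R_φΣ_YR_φᵀ + Q_φ`, `Σ_{Z|Θ} = R_φSR_φᵀ + Q_φ`. -/

lemma one_le_det_one_add {k : ℕ} {E : Matrix (Fin k) (Fin k) ℝ} (hE : E.PosSemidef) :
    1 ≤ (1 + E).det := by
  have hH := hE.isHermitian
  set U : Matrix (Fin k) (Fin k) ℝ := (hH.eigenvectorUnitary : Matrix (Fin k) (Fin k) ℝ) with hUdef
  have hU : U * star U = 1 := Matrix.mem_unitaryGroup_iff.mp hH.eigenvectorUnitary.2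
  set D : Matrix (Fin k) (Fin k) ℝ := diagonal (RCLike.ofReal ∘ hH.eigenvalues) with hDdef
  have h1 : (1 + E) = U * (1 + D) * star U := by
    rw [mul_add, mul_one, add_mul, hU, hH.spectral_theorem, Unitary.conjStarAlgAut_apply]
  have h2 : (1 + E).det = (1 + D).det := by
    rw [h1, det_mul_right_comm, hU, one_mul]
  rw [h2]
  have h3 : (1 : Matrix (Fin k) (Fin k) ℝ) + D = diagonal (fun i => 1 + hH.eigenvalues i) := by
    rw [hDdef, ← diagonal_one, diagonal_add]
    congr 1
  rw [h3, det_diagonal]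
  calc (1:ℝ) = ∏ _i : Fin k, 1 := by simp
    _ ≤ ∏ i, (1 + hH.eigenvalues i) :=
        Finset.prod_le_prod (by simp) (fun i _ => by linarith [hE.eigenvalues_nonneg i])

lemma det_le_det_add_psd {k : ℕ} {P E : Matrix (Fin k) (Fin k) ℝ}
    (hP : P.PosDef) (hE : E.PosSemidef) : P.det ≤ (P + E).det := by
  have hPd : IsUnit P.det := isUnit_iff_ne_zero.mpr hP.det_pos.ne'
  set F := CFC.sqrt E with hF
  have hFF : F * F = E := CFC.sqrt_mul_sqrt_self E hE.nonneg
  have hFH : Fᴴ = F := (CFC.sqrt_nonneg E).posSemidef.isHermitian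
  have e1 : P + E = P * (1 + P⁻¹ * F * F) := by
    rw [mul_add, mul_one, Matrix.mul_assoc, Matrix.mul_nonsing_inv_cancel_left _ _ hPd, hFF]
  have e2 : (P + E).det = P.det * (1 + F * P⁻¹ * F).det := by
    rw [e1, det_mul]
    congr 1
    rw [Matrix.det_one_add_mul_comm, ← Matrix.mul_assoc]
  have hpsd : (F * P⁻¹ * F).PosSemidef := by
    have := hP.posSemidef.inv.conjTranspose_mul_mul_same F
    rwa [hFH] at this
  have h1 : 1 ≤ (1 + F * P⁻¹ * F).det := one_le_det_one_add hpsd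
  calc P.det = P.det * 1 := (mul_one _).symm
    _ ≤ P.det * (1 + F * P⁻¹ * F).det := mul_le_mul_of_nonneg_left h1 hP.det_pos.le
    _ = (P + E).det := e2.symm

set_option maxHeartbeats 1000000 in
lemma key_psd {n l : ℕ} {S : Matrix (Fin n) (Fin n) ℝ} (hS : S.PosDef)
    {R : Matrix (Fin l) (Fin n) ℝ} {Q : Matrix (Fin l) (Fin l) ℝ} (hQ : Q.PosSemidef)
    (hT : (R * S * Rᵀ + Q).PosDef) :
    (S⁻¹ - Rᵀ * (R * S * Rᵀ + Q)⁻¹ * R).PosSemidef := by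
  set T := R * S * Rᵀ + Q with hTdef
  have hSd : IsUnit S.det := isUnit_iff_ne_zero.mpr hS.det_pos.ne'
  have hTd : IsUnit T.det := isUnit_iff_ne_zero.mpr hT.det_pos.ne'
  have hSS : S * S⁻¹ = 1 := Matrix.mul_nonsing_inv _ hSd
  have hTT : T * T⁻¹ = 1 := Matrix.mul_nonsing_inv _ hTd
  have hSt : Sᵀ = S := by rw [← conjTranspose_eq_transpose_of_trivial, hS.isHermitian.eq]
  have hTt : Tᵀ = T := by rw [← conjTranspose_eq_transpose_of_trivial, hT.isHermitian.eq]
  have hSiT : (S⁻¹)ᵀ = S⁻¹ := by rw [Matrix.transpose_nonsing_inv, hSt]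
  have hTiT : (T⁻¹)ᵀ = T⁻¹ := by rw [Matrix.transpose_nonsing_inv, hTt]
  set W := S⁻¹ - Rᵀ * T⁻¹ * R with hWdef
  have hQeq : Q = T - R * S * Rᵀ := by rw [hTdef]; abel
  have hWH : Wᴴ = W := by
    rw [conjTranspose_eq_transpose_of_trivial, hWdef, transpose_sub, hSiT,
      transpose_mul, transpose_mul, transpose_transpose, hTiT, Matrix.mul_assoc]
  have hid : W = W * S * Wᴴ + (Rᵀ * T⁻¹) * Q * (Rᵀ * T⁻¹)ᴴ := by
    rw [hWH, hQeq]
    rw [conjTranspose_eq_transpose_of_trivial, transpose_mul, transpose_transpose, hTiT]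
    rw [hWdef]
    simp only [Matrix.sub_mul, Matrix.mul_sub, Matrix.add_mul, Matrix.mul_add,
      Matrix.mul_assoc, Matrix.nonsing_inv_mul_cancel_left _ _ hSd,
      Matrix.nonsing_inv_mul_cancel_left _ _ hTd,
      Matrix.mul_nonsing_inv_cancel_left _ _ hSd,
      Matrix.mul_nonsing_inv_cancel_left _ _ hTd, hSS, hTT, Matrix.mul_one]
    abel
  rw [hid]
  exact ((hS.posSemidef.mul_mul_conjTranspose_same W).add
    (hQ.mul_mul_conjTranspose_same (Rᵀ * T⁻¹)))

lemma det_add_mul_mul {k r : ℕ} {P : Matrix (Fin k) (Fin k) ℝ} (hPd : IsUnit P.det)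
    (X : Matrix (Fin k) (Fin r) ℝ) (Y : Matrix (Fin r) (Fin k) ℝ) :
    (P + X * Y).det = P.det * (1 + Y * (P⁻¹ * X)).det := by
  have e1 : P + X * Y = P * (1 + P⁻¹ * X * Y) := by
    rw [mul_add, mul_one, Matrix.mul_assoc P⁻¹ X Y, Matrix.mul_nonsing_inv_cancel_left _ _ hPd]
  rw [e1, det_mul]
  congr 1
  rw [Matrix.det_one_add_mul_comm]

theorem stmt17 {l m n : ℕ} (A : Matrix (Fin n) (Fin m) ℝ)
    (SigΘ : Matrix (Fin m) (Fin m) ℝ) (hSigΘ : SigΘ.PosSemidef)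
    (S : Matrix (Fin n) (Fin n) ℝ) (hS : S.PosDef)
    (Rφ : Matrix (Fin l) (Fin n) ℝ) (Qφ : Matrix (Fin l) (Fin l) ℝ)
    (hQφ : Qφ.PosSemidef)
    (SigY : Matrix (Fin n) (Fin n) ℝ) (hSigY : SigY = A * SigΘ * Aᵀ + S)
    (SigZ : Matrix (Fin l) (Fin l) ℝ) (hSigZ : SigZ = Rφ * SigY * Rφᵀ + Qφ)
    (SigZΘ : Matrix (Fin l) (Fin l) ℝ) (hSigZΘ : SigZΘ = Rφ * S * Rφᵀ + Qφ)
    (hSigZΘpd : SigZΘ.PosDef) :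
    (1 / 2 : ℝ) * Real.log (SigZ.det / SigZΘ.det)
      ≤ (1 / 2) * Real.log (SigY.det / S.det) := by
  have hM : (A * SigΘ * Aᵀ).PosSemidef := by
    have := hSigΘ.mul_mul_conjTranspose_same A
    rwa [conjTranspose_eq_transpose_of_trivial] at this
  set N := CFC.sqrt (A * SigΘ * Aᵀ) with hNdef
  have hNN : N * N = A * SigΘ * Aᵀ := CFC.sqrt_mul_sqrt_self _ hM.nonneg
  have hNH : Nᴴ = N := (CFC.sqrt_nonneg (A * SigΘ * Aᵀ)).posSemidef.isHermitian
  have hSd : IsUnit S.det := isUnit_iff_ne_zero.mpr hS.det_pos.ne'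
  have hTd : IsUnit SigZΘ.det := isUnit_iff_ne_zero.mpr hSigZΘpd.det_pos.ne'
  -- decompositions
  have hY2 : SigY = S + N * N := by rw [hSigY, hNN, add_comm]
  have hZ2 : SigZ = SigZΘ + (Rφ * N) * (N * Rφᵀ) := by
    rw [hSigZ, hY2, hSigZΘ]
    simp only [Matrix.mul_add, Matrix.add_mul, Matrix.mul_assoc]
    abel
  set G := (N * Rφᵀ) * (SigZΘ⁻¹ * (Rφ * N)) with hGdef
  set H := N * (S⁻¹ * N) with hHdef
  have detY : SigY.det = S.det * (1 + H).det := by rw [hY2]; exact det_add_mul_mul hSd N N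
  have detZ : SigZ.det = SigZΘ.det * (1 + G).det := by
    rw [hZ2]; exact det_add_mul_mul hTd _ _
  -- G is PSD
  have hGpsd : G.PosSemidef := by
    have h := (hSigZΘpd.posSemidef.inv).mul_mul_conjTranspose_same (N * Rφᵀ)
    have he : (N * Rφᵀ)ᴴ = Rφ * N := by
      rw [conjTranspose_mul, hNH, conjTranspose_eq_transpose_of_trivial, transpose_transpose]
    rw [he, Matrix.mul_assoc] at h
    exact h
  -- H - G is PSD
  have hW : (S⁻¹ - Rφᵀ * SigZΘ⁻¹ * Rφ).PosSemidef := by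
    have := key_psd hS hQφ (hSigZΘ ▸ hSigZΘpd)
    rwa [← hSigZΘ] at this
  have hHG : (H - G) = N * (S⁻¹ - Rφᵀ * SigZΘ⁻¹ * Rφ) * Nᴴ := by
    rw [hNH, hHdef, hGdef]
    simp only [Matrix.mul_sub, Matrix.sub_mul, Matrix.mul_assoc]
  have hHGpsd : (H - G).PosSemidef := by
    rw [hHG]; exact hW.mul_mul_conjTranspose_same N
  -- determinant comparison
  have h1G : (1 + G).PosDef := Matrix.PosDef.add_posSemidef Matrix.PosDef.one hGpsd
  have hdet_le : (1 + G).det ≤ (1 + H).det := by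
    have := det_le_det_add_psd h1G hHGpsd
    rwa [show (1 + G) + (H - G) = 1 + H by abel] at this
  have h1led : (1:ℝ) ≤ (1 + G).det := one_le_det_one_add hGpsd
  have eZ : SigZ.det / SigZΘ.det = (1 + G).det := by
    rw [detZ, mul_comm, mul_div_assoc, div_self hSigZΘpd.det_pos.ne', mul_one]
  have eY : SigY.det / S.det = (1 + H).det := by
    rw [detY, mul_comm, mul_div_assoc, div_self hS.det_pos.ne', mul_one]
  rw [eZ, eY]
  apply mul_le_mul_of_nonneg_left _ (by norm_num)
  exact Real.log_le_log (lt_of_lt_of_le zero_lt_one h1led) hdet_le
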